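/- For the scalar Riccati terminal value problem a'(t) = â² − a(t)², a(T) = −c, with â > 0 and c ≥ 0, the solution is a(t) = â − ( (1/(2â))(1 − e^{−2â(T−t)}) + e^{−2â(T−t)}/(c+â) )⁻¹, it exists on all of (−∞, T], and satisfies −max(c, â) ≤ a(t) ≤ â for all t ≤ T. -/

import Mathlib

/-- The scalar Riccati solution
`a(t) = â − ((1/(2â))(1 − e^{−2â(T−t)}) + e^{−2â(T−t)}/(c+â))⁻¹`. -/
noncomputable def scalarRiccatiSol (T ahat c : ℝ) (t : ℝ) : ℝ :=
  ahat - ((1 / (2 * ahat)) * (1 - Real.exp (-(2 * ahat * (T - t))))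
    + Real.exp (-(2 * ahat * (T - t))) / (c + ahat))⁻¹

/-- For `â > 0` and `c ≥ 0`, the scalar Riccati terminal value problem
`a'(t) = â² − a(t)²`, `a(T) = −c` is solved on all of `(−∞, T]` by `scalarRiccatiSol`,
which satisfies the bounds `−max(c, â) ≤ a(t) ≤ â`. -/
theorem scalar_riccati (T ahat c : ℝ) (hahat : 0 < ahat) (hc : 0 ≤ c) :
    (∀ t ≤ T, HasDerivAt (scalarRiccatiSol T ahat c)
        (ahat ^ 2 - scalarRiccatiSol T ahat c t ^ 2) t) ∧
    scalarRiccatiSol T ahat c T = -c ∧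
    ∀ t ≤ T, -max c ahat ≤ scalarRiccatiSol T ahat c t ∧ scalarRiccatiSol T ahat c t ≤ ahat := by
  have hca : 0 < c + ahat := by linarith
  set u : ℝ → ℝ := fun t => (1 / (2 * ahat)) * (1 - Real.exp (-(2 * ahat * (T - t))))
    + Real.exp (-(2 * ahat * (T - t))) / (c + ahat) with hu_def
  -- positivity of u on t ≤ T
  have hupos : ∀ t ≤ T, 0 < u t := by
    intro t ht
    have hE1 : Real.exp (-(2 * ahat * (T - t))) ≤ 1 := by
      rw [Real.exp_le_one_iff]
      nlinarith
    have hE0 : 0 < Real.exp (-(2 * ahat * (T - t))) := Real.exp_pos _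
    have h1 : 0 ≤ (1 / (2 * ahat)) * (1 - Real.exp (-(2 * ahat * (T - t)))) := by
      apply mul_nonneg
      · positivity
      · linarith
    have h2 : 0 < Real.exp (-(2 * ahat * (T - t))) / (c + ahat) := by positivity
    simp only [hu_def]
    linarith
  -- derivative of u
  have hu' : ∀ t : ℝ, HasDerivAt u
      ((1 / (2 * ahat)) * -(Real.exp (-(2 * ahat * (T - t))) * (2 * ahat))
        + Real.exp (-(2 * ahat * (T - t))) * (2 * ahat) / (c + ahat)) t := by
    intro t
    have h1 : HasDerivAt (fun t : ℝ => -(2 * ahat * (T - t))) (2 * ahat) t := by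
      have := ((hasDerivAt_id t).const_sub T).const_mul (2 * ahat)
      have h2 := this.neg
      have h3 : HasDerivAt (fun t : ℝ => -(2 * ahat * (T - t))) (-(2 * ahat * -1)) t := h2
      convert h3 using 1
      ring
    have hE : HasDerivAt (fun t : ℝ => Real.exp (-(2 * ahat * (T - t))))
        (Real.exp (-(2 * ahat * (T - t))) * (2 * ahat)) t := h1.exp
    exact ((hE.const_sub 1).const_mul (1 / (2 * ahat))).add (hE.div_const (c + ahat))
  refine ⟨?_, ?_, ?_⟩
  · intro t ht
    have hut := hupos t ht
    have hune : u t ≠ 0 := ne_of_gt hut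
    have hd : HasDerivAt (scalarRiccatiSol T ahat c)
        (-(-((1 / (2 * ahat)) * -(Real.exp (-(2 * ahat * (T - t))) * (2 * ahat))
          + Real.exp (-(2 * ahat * (T - t))) * (2 * ahat) / (c + ahat)) / u t ^ 2)) t :=
      ((hu' t).inv hune).const_sub ahat
    convert hd using 1
    have haha : (2 * ahat) ≠ 0 := by positivity
    have hca' : c + ahat ≠ 0 := ne_of_gt hca
    have key : (1 / (2 * ahat)) * -(Real.exp (-(2 * ahat * (T - t))) * (2 * ahat))
        + Real.exp (-(2 * ahat * (T - t))) * (2 * ahat) / (c + ahat) = 2 * ahat * u t - 1 := by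
      simp only [hu_def]
      field_simp
      ring
    show ahat ^ 2 - (ahat - (u t)⁻¹) ^ 2 = _
    rw [key, neg_div, neg_neg]
    field_simp
    ring
  · show ahat - ((1 / (2 * ahat)) * (1 - Real.exp (-(2 * ahat * (T - T))))
      + Real.exp (-(2 * ahat * (T - T))) / (c + ahat))⁻¹ = -c
    rw [sub_self T, mul_zero, neg_zero, Real.exp_zero, sub_self (1 : ℝ), mul_zero, zero_add,
      one_div, inv_inv]
    ring
  · intro t ht
    have hut := hupos t ht
    constructor
    · have hm : ahat ≤ max c ahat := le_max_right _ _
      have hm' : c ≤ max c ahat := le_max_left _ _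
      have hinv : (u t)⁻¹ ≤ ahat + max c ahat := by
        rw [inv_le_comm₀ hut (by positivity)]
        have hE1 : Real.exp (-(2 * ahat * (T - t))) ≤ 1 := by
          rw [Real.exp_le_one_iff]; nlinarith
        have hE0 : 0 < Real.exp (-(2 * ahat * (T - t))) := Real.exp_pos _
        have h1 : (ahat + max c ahat)⁻¹ * (1 - Real.exp (-(2 * ahat * (T - t)))) ≤
            (1 / (2 * ahat)) * (1 - Real.exp (-(2 * ahat * (T - t)))) := by
          apply mul_le_mul_of_nonneg_right _ (by linarith)
          rw [one_div]
          apply inv_anti₀ (by positivity)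
          linarith
        have h2 : (ahat + max c ahat)⁻¹ * Real.exp (-(2 * ahat * (T - t))) ≤
            Real.exp (-(2 * ahat * (T - t))) / (c + ahat) := by
          rw [div_eq_mul_inv, mul_comm ((ahat + max c ahat)⁻¹)]
          apply mul_le_mul_of_nonneg_left _ hE0.le
          apply inv_anti₀ hca
          linarith
        have heq : (ahat + max c ahat)⁻¹
            = (ahat + max c ahat)⁻¹ * (1 - Real.exp (-(2 * ahat * (T - t))))
            + (ahat + max c ahat)⁻¹ * Real.exp (-(2 * ahat * (T - t))) := by ring
        rw [heq, hu_def]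
        exact add_le_add h1 h2
      show -max c ahat ≤ ahat - (u t)⁻¹
      linarith
    · show ahat - (u t)⁻¹ ≤ ahat
      have : 0 < (u t)⁻¹ := by positivity
      linarith
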